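/- arXiv:2105.04873 — 4 statements merged into one kernel-verified Lean document; each statement's English description precedes it below -/
import Mathlib

section
/- Let $f,h:\mathbb{R}^d\to\mathbb{R}$ be differentiable, with $h$ convex, and let $L>0$. Then $Lh-f$ and $Lh+f$ are both convex if and only if $|f(x)-f(y)-\langle\nabla f(y),x-y\rangle|\leq L\,D_h(x,y)$ for all $x,y\in\mathbb{R}^d$ (the full extended descent lemma). -/
open RealInnerProductSpace

section Aux

variable {E : Type*} [NormedAddCommGroup E] [InnerProductSpace ℝ E]

/-- If `g` is convex and the map `t ↦ g (y + t • (x - y))` has derivative `s` at `0`,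
then `s ≤ g x - g y`. -/
lemma dirDeriv_le_of_convexOn {g : E → ℝ} (hc : ConvexOn ℝ Set.univ g)
    (x y : E) {s : ℝ}
    (hd : HasDerivAt (fun t : ℝ => g (y + t • (x - y))) s 0) :
    s ≤ g x - g y := by
  set φ : ℝ → ℝ := fun t => g (y + t • (x - y)) with hφ
  have hslope : Filter.Tendsto (slope φ 0) (nhdsWithin 0 (Set.Ioi 0)) (nhds s) :=
    (hasDerivAt_iff_tendsto_slope.mp hd).mono_left
      (nhdsWithin_mono _ (fun t ht => ne_of_gt ht))
  refine le_of_tendsto hslope ?_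
  filter_upwards [Ioc_mem_nhdsGT_of_mem (Set.left_mem_Ico.2 one_pos)] with t ht
  have ht0 : (0:ℝ) < t := ht.1
  have ht1 : t ≤ 1 := ht.2
  have hconv := hc.2 (Set.mem_univ x) (Set.mem_univ y) (le_of_lt ht0)
    (by linarith : (0:ℝ) ≤ 1 - t) (by ring)
  have hyt : y + t • (x - y) = t • x + (1 - t) • y := by
    simp [smul_sub, sub_smul]; abel
  have hφt : φ t ≤ t * g x + (1 - t) * g y := by
    rw [hφ]; simp only; rw [hyt]; simpa [smul_eq_mul] using hconv
  have hφ0 : φ 0 = g y := by simp [hφ]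
  rw [slope_def_field, sub_zero, div_le_iff₀ ht0]
  nlinarith [hφt, hφ0]

/-- First-order condition implies convexity. -/
lemma convexOn_of_grad_ineq {g : E → ℝ} {g' : E → E}
    (h1 : ∀ x y, g y + ⟪g' y, x - y⟫ ≤ g x) :
    ConvexOn ℝ Set.univ g := by
  refine ⟨convex_univ, fun x _ y _ a b ha hb hab => ?_⟩
  set z := a • x + b • y
  have ix := h1 x z
  have iy := h1 y z
  have hz : a • (x - z) + b • (y - z) = 0 := by
    have e : a • (x - z) + b • (y - z) = a • x + b • y - (a + b) • z := by
      module
    rw [e, hab, one_smul, sub_self]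
  have hinner : a * ⟪g' z, x - z⟫ + b * ⟪g' z, y - z⟫ = 0 := by
    rw [← real_inner_smul_right, ← real_inner_smul_right, ← inner_add_right, hz,
      inner_zero_right]
  simp only [smul_eq_mul]
  have hsum := add_le_add (mul_le_mul_of_nonneg_left ix ha) (mul_le_mul_of_nonneg_left iy hb)
  have hgz : a * g z + b * g z = g z := by rw [← add_mul, hab, one_mul]
  nlinarith [hsum, hinner, hgz]

end Aux

/-- Full extended descent lemma: `(f, h)` is `L`-smooth adaptable iff
`|f(x) - f(y) - ⟪∇f(y), x - y⟫| ≤ L D_h(x, y)` for all `x, y`. -/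
theorem full_extended_descent_lemma (d : ℕ)
    (f h : EuclideanSpace ℝ (Fin d) → ℝ)
    (f' h' : EuclideanSpace ℝ (Fin d) → EuclideanSpace ℝ (Fin d))
    (hf : ∀ x, HasGradientAt f (f' x) x)
    (hh : ∀ x, HasGradientAt h (h' x) x)
    (hconv : ConvexOn ℝ Set.univ h)
    (L : ℝ) (hL : 0 < L)
    (D : EuclideanSpace ℝ (Fin d) → EuclideanSpace ℝ (Fin d) → ℝ)
    (hD : ∀ x y, D x y = h x - h y - ⟪h' y, x - y⟫) :
    (ConvexOn ℝ Set.univ (fun x => L * h x - f x) ∧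
      ConvexOn ℝ Set.univ (fun x => L * h x + f x)) ↔
    (∀ x y, |f x - f y - ⟪f' y, x - y⟫| ≤ L * D x y) := by
  -- directional derivatives
  have dirf : ∀ x y : EuclideanSpace ℝ (Fin d),
      HasDerivAt (fun t : ℝ => f (y + t • (x - y))) ⟪f' y, x - y⟫ 0 := by
    intro x y
    have hcurve : HasDerivAt (fun t : ℝ => y + t • (x - y)) (x - y) 0 := by
      simpa using ((hasDerivAt_id (0:ℝ)).smul_const (x - y)).const_add y
    have h0 : y + (0:ℝ) • (x - y) = y := by simp
    have hl : HasFDerivAt f ((InnerProductSpace.toDual ℝ _) (f' y)) (y + (0:ℝ) • (x - y)) := by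
      rw [h0]; exact (hf y).hasFDerivAt
    simpa [InnerProductSpace.toDual_apply_apply, Function.comp_def] using hl.comp_hasDerivAt 0 hcurve
  have dirh : ∀ x y : EuclideanSpace ℝ (Fin d),
      HasDerivAt (fun t : ℝ => h (y + t • (x - y))) ⟪h' y, x - y⟫ 0 := by
    intro x y
    have hcurve : HasDerivAt (fun t : ℝ => y + t • (x - y)) (x - y) 0 := by
      simpa using ((hasDerivAt_id (0:ℝ)).smul_const (x - y)).const_add y
    have h0 : y + (0:ℝ) • (x - y) = y := by simp
    have hl : HasFDerivAt h ((InnerProductSpace.toDual ℝ _) (h' y)) (y + (0:ℝ) • (x - y)) := by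
      rw [h0]; exact (hh y).hasFDerivAt
    simpa [InnerProductSpace.toDual_apply_apply, Function.comp_def] using hl.comp_hasDerivAt 0 hcurve
  constructor
  · rintro ⟨hm, hp⟩ x y
    have dm : HasDerivAt (fun t : ℝ => L * h (y + t • (x - y)) - f (y + t • (x - y)))
        (L * ⟪h' y, x - y⟫ - ⟪f' y, x - y⟫) 0 :=
      ((dirh x y).const_mul L).sub (dirf x y)
    have dp : HasDerivAt (fun t : ℝ => L * h (y + t • (x - y)) + f (y + t • (x - y)))
        (L * ⟪h' y, x - y⟫ + ⟪f' y, x - y⟫) 0 :=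
      ((dirh x y).const_mul L).add (dirf x y)
    have im := dirDeriv_le_of_convexOn hm x y dm
    have ip := dirDeriv_le_of_convexOn hp x y dp
    rw [hD, abs_le]
    constructor <;> nlinarith [im, ip]
  · intro hb
    have key : ∀ x y : EuclideanSpace ℝ (Fin d),
        |f x - f y - ⟪f' y, x - y⟫| ≤ L * (h x - h y - ⟪h' y, x - y⟫) := by
      intro x y; simpa [hD] using hb x y
    constructor
    · apply convexOn_of_grad_ineq (g' := fun y => L • h' y - f' y)
      intro x y
      have := (abs_le.mp (key x y)).2
      rw [inner_sub_left, real_inner_smul_left]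
      nlinarith
    · apply convexOn_of_grad_ineq (g' := fun y => L • h' y + f' y)
      intro x y
      have := (abs_le.mp (key x y)).1
      rw [inner_add_left, real_inner_smul_left]
      nlinarith
end

section
/- Let $f_1,f_2,g,h:\mathbb{R}^d\to\mathbb{R}$ with $f_1$ convex differentiable, $f_2$ convex, $h$ convex differentiable, and suppose $Lh-f_1$ is convex for some $L>0$. Let $0<\lambda$, let $x\in\mathbb{R}^d$, $\xi$ a subgradient of $f_2$ at $x$, and let $x^+$ be a global minimizer of $u\mapsto g(u)+\langle\nabla f_1(x)-\xi,u-x\rangle+\frac{1}{\lambda}D_h(u,x)$. Then, with $\Psi=f_1-f_2+g$, it holds that $\lambda\Psi(x^+)\leq\lambda\Psi(x)-(1-\lambda L)D_h(x^+,x)$. -/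
open RealInnerProductSpace

lemma convex_support_ineq {E : Type*} [NormedAddCommGroup E] [NormedSpace ℝ E]
    (φ : E → ℝ) (q : E →L[ℝ] ℝ) (y z : E)
    (hconv : ConvexOn ℝ Set.univ φ) (hd : HasFDerivAt φ q y) :
    φ y + q (z - y) ≤ φ z := by
  set ψ : ℝ → ℝ := fun t => φ (t • (z - y) + y) with hψ
  have hline : HasDerivAt (fun t : ℝ => t • (z - y) + y) (z - y) 0 := by
    simpa using ((hasDerivAt_id (0:ℝ)).smul_const (z - y)).add_const y
  have hd' : HasFDerivAt φ q ((0:ℝ) • (z - y) + y) := by simpa using hd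
  have hderiv : HasDerivAt ψ (q (z - y)) 0 := by
    have := hd'.comp_hasDerivAt (x := (0:ℝ)) hline
    exact this
  have hψconv : ConvexOn ℝ Set.univ ψ := by
    constructor
    · exact convex_univ
    · intro a _ b _ wa wb hwa hwb hw
      have := hconv.2 (Set.mem_univ (a • (z - y) + y)) (Set.mem_univ (b • (z - y) + y))
        hwa hwb hw
      have harg : (wa * a + wb * b) • (z - y) + y
          = wa • (a • (z - y) + y) + wb • (b • (z - y) + y) := by
        have h2 : wa • (a • (z - y) + y) + wb • (b • (z - y) + y)
            = (wa * a + wb * b) • (z - y) + (wa + wb) • y := by module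
        rw [h2, hw, one_smul]
      simp only [ψ, smul_eq_mul]
      rw [harg]
      exact this
  have hslope : ∀ t ∈ Set.Ioc (0:ℝ) 1, slope ψ 0 t ≤ φ z - φ y := by
    intro t ht
    have h1 : ψ t ≤ (1 - t) * ψ 0 + t * ψ 1 := by
      have := hψconv.2 (Set.mem_univ (0:ℝ)) (Set.mem_univ (1:ℝ))
        (by linarith [ht.2] : (0:ℝ) ≤ 1 - t) ht.1.le (by ring)
      simpa [smul_eq_mul] using this
    have hψ0 : ψ 0 = φ y := by simp [ψ]
    have hψ1 : ψ 1 = φ z := by simp [ψ]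
    rw [slope_def_field, sub_zero, div_le_iff₀ ht.1]
    nlinarith [ht.1]
  have htend : Filter.Tendsto (slope ψ 0) (nhdsWithin 0 (Set.Ioi 0)) (nhds (q (z - y))) :=
    (hasDerivAt_iff_tendsto_slope.mp hderiv).mono_left
      (nhdsWithin_mono _ (fun t ht => ne_of_gt ht))
  have hle : q (z - y) ≤ φ z - φ y := by
    refine le_of_tendsto htend ?_
    filter_upwards [Ioc_mem_nhdsGT_of_mem (by norm_num : (0:ℝ) ∈ Set.Ico (0:ℝ) 1)] with t ht
    exact hslope t ht
  linarith

/-- Sufficient decrease lemma for the Bregman proximal DC algorithm (BPDCA). -/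
theorem bpdca_sufficient_decrease (d : ℕ)
    (f₁ f₂ g h : EuclideanSpace ℝ (Fin d) → ℝ)
    (f₁' h' : EuclideanSpace ℝ (Fin d) → EuclideanSpace ℝ (Fin d))
    (hf₁ : ∀ x, HasGradientAt f₁ (f₁' x) x)
    (hh : ∀ x, HasGradientAt h (h' x) x)
    (hf₁conv : ConvexOn ℝ Set.univ f₁)
    (hf₂conv : ConvexOn ℝ Set.univ f₂)
    (hhconv : ConvexOn ℝ Set.univ h)
    (L : ℝ) (hL : 0 < L)
    (hsmad : ConvexOn ℝ Set.univ (fun x => L * h x - f₁ x))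
    (D : EuclideanSpace ℝ (Fin d) → EuclideanSpace ℝ (Fin d) → ℝ)
    (hD : ∀ x y, D x y = h x - h y - ⟪h' y, x - y⟫)
    (Ψ : EuclideanSpace ℝ (Fin d) → ℝ)
    (hΨ : ∀ x, Ψ x = f₁ x - f₂ x + g x)
    (lam : ℝ) (hlam : 0 < lam)
    (x ξ xplus : EuclideanSpace ℝ (Fin d))
    (hξ : ∀ y, f₂ y ≥ f₂ x + ⟪ξ, y - x⟫)
    (hmin : ∀ u, g xplus + ⟪f₁' x - ξ, xplus - x⟫ + (1 / lam) * D xplus x ≤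
      g u + ⟪f₁' x - ξ, u - x⟫ + (1 / lam) * D u x) :
    lam * Ψ xplus ≤ lam * Ψ x - (1 - lam * L) * D xplus x := by
  -- derivative of L * h - f₁
  have hf₁F : HasFDerivAt f₁ (InnerProductSpace.toDual ℝ (EuclideanSpace ℝ (Fin d)) (f₁' x)) x :=
    (hf₁ x).hasFDerivAt
  have hhF : HasFDerivAt h (InnerProductSpace.toDual ℝ (EuclideanSpace ℝ (Fin d)) (h' x)) x :=
    (hh x).hasFDerivAt
  have hcomb : HasFDerivAt (fun u => L * h u - f₁ u)
      (L • InnerProductSpace.toDual ℝ (EuclideanSpace ℝ (Fin d)) (h' x) - InnerProductSpace.toDual ℝ (EuclideanSpace ℝ (Fin d)) (f₁' x)) x := by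
    exact (hhF.const_smul L).sub hf₁F
  -- key inequality from L-smoothness (convexity of L h - f₁)
  have hB := convex_support_ineq (fun u => L * h u - f₁ u)
    (L • InnerProductSpace.toDual ℝ (EuclideanSpace ℝ (Fin d)) (h' x) - InnerProductSpace.toDual ℝ (EuclideanSpace ℝ (Fin d)) (f₁' x))
    x xplus hsmad hcomb
  simp only [ContinuousLinearMap.sub_apply, ContinuousLinearMap.smul_apply,
    InnerProductSpace.toDual_apply_apply, smul_eq_mul, real_inner_comm] at hB
  -- subgradient inequality for f₂
  have hC := hξ xplus
  -- minimality at u = x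
  have hA := hmin x
  have hDxx : D x x = 0 := by
    simp [hD x x]
  rw [hDxx] at hA
  simp only [sub_self, inner_zero_right, mul_zero, add_zero] at hA
  -- expand D and inner products
  rw [hD xplus x] at hA ⊢
  rw [inner_sub_left] at hA
  have hIc : ⟪h' x, xplus - x⟫ = ⟪xplus - x, h' x⟫ := real_inner_comm _ _
  have hIf : ⟪f₁' x, xplus - x⟫ = ⟪xplus - x, f₁' x⟫ := real_inner_comm _ _
  rw [hΨ xplus, hΨ x]
  have hA' : lam * (g xplus + (⟪f₁' x, xplus - x⟫ - ⟪ξ, xplus - x⟫)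
      + 1 / lam * (h xplus - h x - ⟪h' x, xplus - x⟫)) ≤ lam * g x :=
    mul_le_mul_of_nonneg_left hA hlam.le
  have hlam' : lam ≠ 0 := ne_of_gt hlam
  have hexp : lam * (g xplus + (⟪f₁' x, xplus - x⟫ - ⟪ξ, xplus - x⟫)
      + 1 / lam * (h xplus - h x - ⟪h' x, xplus - x⟫))
      = lam * g xplus + lam * (⟪f₁' x, xplus - x⟫ - ⟪ξ, xplus - x⟫)
      + (h xplus - h x - ⟪h' x, xplus - x⟫) := by
    field_simp
  rw [hexp] at hA'
  nlinarith [mul_le_mul_of_nonneg_left hB hlam.le, mul_le_mul_of_nonneg_left hC hlam.le]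
end

section
/- Define $f_1(x)=\frac{1}{4}\sum_{r=1}^m\langle a_r,x\rangle^4+\frac{1}{4}\|b\|^2$ and $h(x)=\frac{1}{4}\|x\|^4$ on $\mathbb{R}^d$, where $a_1,\ldots,a_m\in\mathbb{R}^d$ and $b\in\mathbb{R}^m$. Then for any $L\geq 3\left\|\sum_{r=1}^m\|a_r\|^2 a_r a_r^{\mathrm{T}}\right\|$ (operator norm), the function $Lh-f_1$ is convex on $\mathbb{R}^d$. -/
open RealInnerProductSpace

/-- 1-D convexity lemma for the line restriction. -/
lemma aux_line_convex {m : ℕ} (L A B C c : ℝ) (p q : Fin m → ℝ)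
    (hkey : ∀ t : ℝ, 3 * ∑ r, (q r)^2 * (p r + q r * t)^2 ≤
      L * (1/2) * ((B + 2*C*t)^2 + 2*C*(A + B*t + C*t^2))) :
    ConvexOn ℝ Set.univ
      (fun t : ℝ => L * (1/4) * (A + B*t + C*t^2)^2 -
        ((1/4) * ∑ r, (p r + q r * t)^4 + c)) := by
  set g0 : ℝ → ℝ := fun t => L * (1/4) * (A + B*t + C*t^2)^2 -
        ((1/4) * ∑ r, (p r + q r * t)^4 + c) with hg0def
  set g1 : ℝ → ℝ := fun t => L * (1/2) * ((A + B*t + C*t^2) * (B + 2*C*t)) -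
        ∑ r, (p r + q r * t)^3 * q r with hg1def
  set g2 : ℝ → ℝ := fun t => L * (1/2) * ((B + 2*C*t)^2 + 2*C*(A + B*t + C*t^2)) -
        3 * ∑ r, (q r)^2 * (p r + q r * t)^2 with hg2def
  have hs : ∀ t : ℝ, HasDerivAt (fun t : ℝ => A + B*t + C*t^2) (B + 2*C*t) t := by
    intro t
    have h : HasDerivAt (fun t : ℝ => A + B*t + C*t^2)
        (0 + B*1 + C*((2:ℕ)*t^(2-1)*1)) t :=
      ((hasDerivAt_const t A).add ((hasDerivAt_id t).const_mul B)).add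
        (((hasDerivAt_id t).pow 2).const_mul C)
    have heq : (0 + B*1 + C*((2:ℕ)*t^(2-1)*1)) = B + 2*C*t := by push_cast; ring
    exact heq ▸ h
  have hlin : ∀ t : ℝ, HasDerivAt (fun t : ℝ => B + 2*C*t) (2*C) t := by
    intro t
    have h1 : HasDerivAt (fun t : ℝ => 2*C*t) (2*C) t := by
      simpa using (hasDerivAt_id t).const_mul (2*C)
    simpa using (hasDerivAt_const t B).fun_add h1
  have per1 : ∀ (r : Fin m) (t : ℝ),
      HasDerivAt (fun t : ℝ => (p r + q r * t)^4) (4*((p r + q r * t)^3 * q r)) t := by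
    intro r t
    have h := ((hasDerivAt_const t (p r)).add ((hasDerivAt_id t).const_mul (q r))).pow 4
    have heq : ((4:ℕ):ℝ) * (p r + q r * t)^(4-1) * (0 + q r * 1)
        = 4*((p r + q r * t)^3 * q r) := by push_cast; ring
    exact heq ▸ h
  have per2 : ∀ (r : Fin m) (t : ℝ),
      HasDerivAt (fun t : ℝ => (p r + q r * t)^3 * q r)
        (3*((q r)^2 * (p r + q r * t)^2)) t := by
    intro r t
    have h := (((hasDerivAt_const t (p r)).add
      ((hasDerivAt_id t).const_mul (q r))).pow 3).mul_const (q r)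
    have heq : ((3:ℕ):ℝ) * (p r + q r * t)^(3-1) * (0 + q r * 1) * q r
        = 3*((q r)^2 * (p r + q r * t)^2) := by push_cast; ring
    exact heq ▸ h
  have hsum1 : ∀ t : ℝ, HasDerivAt (fun t : ℝ => (1/4) * ∑ r, (p r + q r * t)^4)
      (∑ r, (p r + q r * t)^3 * q r) t := by
    intro t
    have h := (HasDerivAt.fun_sum (fun (r : Fin m) (_ : r ∈ (Finset.univ : Finset (Fin m))) => per1 r t)).const_mul (1/4 : ℝ)
    have heq : (1/4 : ℝ) * ∑ r : Fin m, 4*((p r + q r * t)^3 * q r)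
        = ∑ r : Fin m, (p r + q r * t)^3 * q r := by
      rw [Finset.mul_sum]; exact Finset.sum_congr rfl fun r _ => by ring
    exact heq ▸ h
  have hsum2 : ∀ t : ℝ, HasDerivAt (fun t : ℝ => ∑ r, (p r + q r * t)^3 * q r)
      (3 * ∑ r, (q r)^2 * (p r + q r * t)^2) t := by
    intro t
    have h := HasDerivAt.fun_sum (fun (r : Fin m) (_ : r ∈ (Finset.univ : Finset (Fin m))) => per2 r t)
    have heq : (∑ r : Fin m, 3*((q r)^2 * (p r + q r * t)^2))
        = 3 * ∑ r : Fin m, (q r)^2 * (p r + q r * t)^2 := by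
      rw [Finset.mul_sum]
    exact heq ▸ h
  have hS1 : ∀ t : ℝ, HasDerivAt (fun t : ℝ => L * (1/4) * (A + B*t + C*t^2)^2)
      (L * (1/2) * ((A + B*t + C*t^2) * (B + 2*C*t))) t := by
    intro t
    have h := ((hs t).pow 2).const_mul (L * (1/4))
    have heq : L * (1/4) * (((2:ℕ):ℝ) * (A + B*t + C*t^2)^(2-1) * (B + 2*C*t))
        = L * (1/2) * ((A + B*t + C*t^2) * (B + 2*C*t)) := by push_cast; ring
    exact heq ▸ h
  have hS2 : ∀ t : ℝ, HasDerivAt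
      (fun t : ℝ => L * (1/2) * ((A + B*t + C*t^2) * (B + 2*C*t)))
      (L * (1/2) * ((B + 2*C*t)^2 + 2*C*(A + B*t + C*t^2))) t := by
    intro t
    have h := ((hs t).mul (hlin t)).const_mul (L * (1/2))
    have heq : L * (1/2) * ((B + 2*C*t) * (B + 2*C*t) + (A + B*t + C*t^2) * (2*C))
        = L * (1/2) * ((B + 2*C*t)^2 + 2*C*(A + B*t + C*t^2)) := by ring
    exact heq ▸ h
  have hg0 : ∀ t : ℝ, HasDerivAt g0 (g1 t) t := fun t =>
    (hS1 t).sub ((hsum1 t).add_const c)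
  have hg1 : ∀ t : ℝ, HasDerivAt g1 (g2 t) t := fun t =>
    (hS2 t).sub (hsum2 t)
  have e1 : deriv g0 = g1 := funext fun t => (hg0 t).deriv
  have e2 : deriv g1 = g2 := funext fun t => (hg1 t).deriv
  apply convexOn_univ_of_deriv2_nonneg
  · exact fun t => (hg0 t).differentiableAt
  · rw [e1]; exact fun t => (hg1 t).differentiableAt
  · intro t
    have h2 : deriv^[2] g0 t = g2 t := by
      show deriv (deriv g0) t = g2 t
      rw [e1, e2]
    rw [h2, hg2def]
    have := hkey t
    simp only
    linarith

/-- Key spectral inequality. -/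
lemma key_ineq {d m : ℕ} (a : Fin m → EuclideanSpace ℝ (Fin d)) (L : ℝ)
    (hL : 3 * ‖∑ r, ‖a r‖ ^ 2 • ((innerSL ℝ (a r)).smulRight (a r))‖ ≤ L)
    (y v : EuclideanSpace ℝ (Fin d)) :
    3 * ∑ r, ⟪a r, v⟫^2 * ⟪a r, y⟫^2 ≤ L * (2 * ⟪y, v⟫^2 + ‖v‖^2 * ‖y‖^2) := by
  set M := ∑ r, ‖a r‖ ^ 2 • ((innerSL ℝ (a r)).smulRight (a r)) with hM
  have hL0 : (0:ℝ) ≤ L := le_trans (by positivity) hL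
  have hMv : M v = ∑ r, ‖a r‖ ^ 2 • (⟪a r, v⟫ • a r) := by
    rw [hM, ContinuousLinearMap.sum_apply]
    exact Finset.sum_congr rfl fun r _ => by
      simp [ContinuousLinearMap.smul_apply, ContinuousLinearMap.smulRight_apply]
  have hvMv : ⟪v, M v⟫ = ∑ r, ‖a r‖^2 * ⟪a r, v⟫^2 := by
    rw [hMv, inner_sum]
    refine Finset.sum_congr rfl fun r _ => ?_
    rw [real_inner_smul_right, real_inner_smul_right, real_inner_comm]
    ring
  have h1 : ∑ r, ‖a r‖^2 * ⟪a r, v⟫^2 ≤ ‖M‖ * ‖v‖^2 := by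
    rw [← hvMv]
    calc ⟪v, M v⟫ ≤ ‖v‖ * ‖M v‖ := real_inner_le_norm v (M v)
      _ ≤ ‖v‖ * (‖M‖ * ‖v‖) :=
          mul_le_mul_of_nonneg_left (M.le_opNorm v) (norm_nonneg v)
      _ = ‖M‖ * ‖v‖^2 := by ring
  have h2 : ∑ r, ⟪a r, v⟫^2 * ⟪a r, y⟫^2 ≤ ‖y‖^2 * ∑ r, ‖a r‖^2 * ⟪a r, v⟫^2 := by
    rw [Finset.mul_sum]
    refine Finset.sum_le_sum fun r _ => ?_
    have hcs : ⟪a r, y⟫^2 ≤ ‖a r‖^2 * ‖y‖^2 := by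
      have h := abs_real_inner_le_norm (a r) y
      have h' := pow_le_pow_left₀ (abs_nonneg _) h 2
      rw [sq_abs] at h'
      calc ⟪a r, y⟫^2 ≤ (‖a r‖ * ‖y‖)^2 := h'
        _ = ‖a r‖^2 * ‖y‖^2 := by ring
    nlinarith [sq_nonneg (⟪a r, v⟫)]
  have hMnorm : (0:ℝ) ≤ ‖M‖ := norm_nonneg M
  have hy2 : (0:ℝ) ≤ ‖y‖^2 := sq_nonneg _
  have hv2 : (0:ℝ) ≤ ‖v‖^2 := sq_nonneg _
  have h3 := mul_le_mul_of_nonneg_left h1 hy2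
  have h5 : 3*‖M‖*(‖y‖^2*‖v‖^2) ≤ L*(‖y‖^2*‖v‖^2) :=
    mul_le_mul_of_nonneg_right hL (by positivity)
  have h6 : L*(‖y‖^2*‖v‖^2) ≤ L * (2 * ⟪y, v⟫^2 + ‖v‖^2 * ‖y‖^2) := by
    apply mul_le_mul_of_nonneg_left _ hL0
    nlinarith [sq_nonneg (⟪y, v⟫ : ℝ)]
  linarith [h2, h3, h5, h6]

/-- For phase retrieval in DC form: with `f₁(x) = ¼ ∑ ⟪aᵣ, x⟫⁴ + ¼‖b‖²` and
`h(x) = ¼‖x‖⁴`, if `L ≥ 3‖∑ ‖aᵣ‖² aᵣ aᵣᵀ‖` (operator norm) then `L h - f₁` is convex. -/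
theorem phase_retrieval_L_smad (d m : ℕ)
    (a : Fin m → EuclideanSpace ℝ (Fin d)) (b : EuclideanSpace ℝ (Fin m))
    (f₁ h : EuclideanSpace ℝ (Fin d) → ℝ)
    (hf₁ : ∀ x, f₁ x = (1 / 4) * ∑ r, ⟪a r, x⟫ ^ 4 + (1 / 4) * ‖b‖ ^ 2)
    (hh : ∀ x, h x = (1 / 4) * ‖x‖ ^ 4)
    (L : ℝ)
    (hL : 3 * ‖∑ r, ‖a r‖ ^ 2 • ((innerSL ℝ (a r)).smulRight (a r))‖ ≤ L) :
    ConvexOn ℝ Set.univ (fun x => L * h x - f₁ x) := by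
  constructor
  · exact convex_univ
  intro x _ y _ s t hs ht hst
  set v := y - x with hv
  set φ : ℝ → ℝ := fun u =>
    L * (1/4) * (‖x‖^2 + (2*⟪x,v⟫)*u + ‖v‖^2*u^2)^2 -
      ((1/4) * ∑ r, (⟪a r, x⟫ + ⟪a r, v⟫ * u)^4 + (1/4) * ‖b‖^2) with hφ
  have hline : ConvexOn ℝ Set.univ φ := by
    apply aux_line_convex
    intro u
    have hk := key_ineq a L hL (x + u • v) v
    have e1 : ∀ r : Fin m, ⟪a r, x + u • v⟫ = ⟪a r, x⟫ + ⟪a r, v⟫ * u := by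
      intro r; rw [inner_add_right, real_inner_smul_right]; ring
    have e2 : ⟪x + u • v, v⟫ = ⟪x, v⟫ + u * ‖v‖^2 := by
      rw [inner_add_left, real_inner_smul_left, real_inner_self_eq_norm_sq]
    have e3 : ‖x + u • v‖^2 = ‖x‖^2 + (2*⟪x,v⟫)*u + ‖v‖^2*u^2 := by
      rw [norm_add_sq_real, real_inner_smul_right, norm_smul]
      simp [mul_pow, sq_abs]
      ring
    calc 3 * ∑ r, ⟪a r, v⟫^2 * (⟪a r, x⟫ + ⟪a r, v⟫ * u)^2
        = 3 * ∑ r, ⟪a r, v⟫^2 * ⟪a r, x + u • v⟫^2 := by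
          congr 1; exact Finset.sum_congr rfl fun r _ => by rw [e1]
      _ ≤ L * (2 * ⟪x + u • v, v⟫^2 + ‖v‖^2 * ‖x + u • v‖^2) := hk
      _ = L * (1/2) * ((2*⟪x,v⟫ + 2*‖v‖^2*u)^2 +
            2*‖v‖^2*(‖x‖^2 + (2*⟪x,v⟫)*u + ‖v‖^2*u^2)) := by
          rw [e2, e3]; ring
  have hval : ∀ u : ℝ, (fun x => L * h x - f₁ x) (x + u • v) = φ u := by
    intro u
    simp only [hh, hf₁, hφ]
    have e1 : ∀ r : Fin m, ⟪a r, x + u • v⟫ = ⟪a r, x⟫ + ⟪a r, v⟫ * u := by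
      intro r; rw [inner_add_right, real_inner_smul_right]; ring
    have e3 : ‖x + u • v‖^2 = ‖x‖^2 + (2*⟪x,v⟫)*u + ‖v‖^2*u^2 := by
      rw [norm_add_sq_real, real_inner_smul_right, norm_smul]
      simp [mul_pow, sq_abs]
      ring
    have e4 : ‖x + u • v‖^4 = (‖x + u • v‖^2)^2 := by ring
    have e5 : (∑ r, ⟪a r, x + u • v⟫^4) = ∑ r, (⟪a r, x⟫ + ⟪a r, v⟫ * u)^4 :=
      Finset.sum_congr rfl fun r _ => by rw [e1]
    rw [e4, e3, e5]
    ring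
  have hxy : s • x + t • y = x + t • v := by
    rw [hv, smul_sub]
    have hseq : s = 1 - t := by linarith
    rw [hseq]
    module
  have h0 : (fun x => L * h x - f₁ x) x = φ 0 := by
    have := hval 0
    simpa using this
  have h1 : (fun x => L * h x - f₁ x) y = φ 1 := by
    have := hval 1
    rw [one_smul, hv] at this
    simpa using this
  have hconv := hline.2 (Set.mem_univ (0:ℝ)) (Set.mem_univ (1:ℝ)) hs ht hst
  simp only [smul_eq_mul, mul_zero, mul_one, zero_add] at hconv
  calc (fun x => L * h x - f₁ x) (s • x + t • y) = φ t := by rw [hxy]; exact hval t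
    _ ≤ s * φ 0 + t * φ 1 := hconv
    _ = s * (fun x => L * h x - f₁ x) x + t * (fun x => L * h x - f₁ x) y := by
        rw [h0, h1]
end

section
/- Let $g,f_1,f_2,h:\mathbb{R}^d\to\mathbb{R}$ with $g,f_1,f_2$ convex, $f_1,h$ differentiable, $h$ convex, and suppose $Lh-f_1$ is convex for some $L>0$. Fix $\lambda>0$, points $x^{k-1},x^k\in\mathbb{R}^d$, $\beta_k\in[0,1)$, set $y^k=x^k+\beta_k(x^k-x^{k-1})$, let $\xi^k\in\partial f_2(x^k)$, and let $x^{k+1}$ be a global minimizer of $y\mapsto g(y)+\langle\nabla f_1(y^k)-\xi^k,y-y^k\rangle+\frac{1}{\lambda}D_h(y,y^k)$. Then $\lambda\Psi(x^{k+1})\leq\lambda\Psi(x^k)+D_h(x^k,y^k)-D_h(x^k,x^{k+1})-(1-\lambda L)D_h(x^{k+1},y^k)$, where $\Psi=f_1-f_2+g$. -/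
open RealInnerProductSpace

open Filter Set

lemma slope_tendsto_grad {d : ℕ} {φ : EuclideanSpace ℝ (Fin d) → ℝ}
    {gx x : EuclideanSpace ℝ (Fin d)} (hg : HasGradientAt φ gx x)
    (v : EuclideanSpace ℝ (Fin d)) :
    Tendsto (fun t : ℝ => (φ (x + t • v) - φ x) / t) (nhdsWithin 0 (Set.Ioi 0))
      (nhds ⟪gx, v⟫) := by
  have hline : HasDerivAt (fun t : ℝ => x + t • v) v 0 := by
    simpa using ((hasDerivAt_id (0:ℝ)).smul_const v).const_add x
  have hF : HasFDerivAt φ (InnerProductSpace.toDual ℝ _ gx) x :=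
    hasGradientAt_iff_hasFDerivAt.mp hg
  have hF' : HasFDerivAt φ (InnerProductSpace.toDual ℝ _ gx) ((fun t : ℝ => x + t • v) 0) := by
    simpa using hF
  have hcomp : HasDerivAt (fun t : ℝ => φ (x + t • v)) ⟪gx, v⟫ 0 := by
    have := hF'.comp_hasDerivAt 0 hline
    simp only [Function.comp_def, InnerProductSpace.toDual_apply_apply] at this
    exact this
  have hts := hasDerivAt_iff_tendsto_slope.mp hcomp
  have hmono : nhdsWithin (0:ℝ) (Set.Ioi 0) ≤ nhdsWithin (0:ℝ) {(0:ℝ)}ᶜ :=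
    nhdsWithin_mono 0 (fun t ht => ne_of_gt ht)
  have := hts.mono_left hmono
  refine this.congr fun t => ?_
  simp [slope_def_field]

lemma grad_ineq {d : ℕ} {φ : EuclideanSpace ℝ (Fin d) → ℝ}
    {gx x : EuclideanSpace ℝ (Fin d)} (hc : ConvexOn ℝ Set.univ φ)
    (hg : HasGradientAt φ gx x) (y : EuclideanSpace ℝ (Fin d)) :
    φ x + ⟪gx, y - x⟫ ≤ φ y := by
  have hs := slope_tendsto_grad hg (y - x)
  have hub : ∀ᶠ t in nhdsWithin (0:ℝ) (Set.Ioi 0),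
      (φ (x + t • (y - x)) - φ x) / t ≤ φ y - φ x := by
    filter_upwards [Ioo_mem_nhdsGT_of_mem (Set.mem_Ico.mpr ⟨le_refl (0:ℝ), one_pos⟩)]
      with t ht
    have hcc := hc.2 (Set.mem_univ x) (Set.mem_univ y)
      (by linarith [ht.2] : (0:ℝ) ≤ 1 - t) ht.1.le (by ring)
    have hrw : (1 - t) • x + t • y = x + t • (y - x) := by
      rw [smul_sub, sub_smul, one_smul]; abel
    rw [hrw] at hcc
    rw [div_le_iff₀ ht.1]
    simp only [smul_eq_mul] at hcc
    nlinarith [hcc]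
  have := le_of_tendsto hs hub
  linarith

lemma three_point {d : ℕ} {g h : EuclideanSpace ℝ (Fin d) → ℝ}
    {c yk xkp hyk' hxkp' : EuclideanSpace ℝ (Fin d)}
    (hgconv : ConvexOn ℝ Set.univ g)
    (hhgrad : HasGradientAt h hxkp' xkp)
    {lam : ℝ} (hlam : 0 < lam)
    (hmin : ∀ y, g xkp + ⟪c, xkp - yk⟫ + (1 / lam) * (h xkp - h yk - ⟪hyk', xkp - yk⟫) ≤
      g y + ⟪c, y - yk⟫ + (1 / lam) * (h y - h yk - ⟪hyk', y - yk⟫))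
    (y : EuclideanSpace ℝ (Fin d)) :
    g xkp + ⟪c, xkp - yk⟫ + (1 / lam) * (h xkp - h yk - ⟪hyk', xkp - yk⟫)
      + (1 / lam) * (h y - h xkp - ⟪hxkp', y - xkp⟫) ≤
    g y + ⟪c, y - yk⟫ + (1 / lam) * (h y - h yk - ⟪hyk', y - yk⟫) := by
  set v := y - xkp with hv
  have hF : Tendsto (fun t : ℝ => g y - g xkp + ⟪c, v⟫
        + (1 / lam) * ((h (xkp + t • v) - h xkp) / t - ⟪hyk', v⟫))
      (nhdsWithin 0 (Set.Ioi 0))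
      (nhds (g y - g xkp + ⟪c, v⟫ + (1 / lam) * (⟪hxkp', v⟫ - ⟪hyk', v⟫))) :=
    tendsto_const_nhds.add
      (((slope_tendsto_grad hhgrad v).sub tendsto_const_nhds).const_mul (1 / lam))
  have hnn : ∀ᶠ t in nhdsWithin (0:ℝ) (Set.Ioi 0), 0 ≤ g y - g xkp + ⟪c, v⟫
        + (1 / lam) * ((h (xkp + t • v) - h xkp) / t - ⟪hyk', v⟫) := by
    filter_upwards [Ioo_mem_nhdsGT_of_mem (Set.mem_Ico.mpr ⟨le_refl (0:ℝ), one_pos⟩)]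
      with t ht
    have hm := hmin (xkp + t • v)
    have hg' : g (xkp + t • v) ≤ (1 - t) * g xkp + t * g y := by
      have hcc := hgconv.2 (Set.mem_univ xkp) (Set.mem_univ y)
        (by linarith [ht.2] : (0:ℝ) ≤ 1 - t) ht.1.le (by ring)
      have hrw : (1 - t) • xkp + t • y = xkp + t • v := by
        rw [hv, smul_sub, sub_smul, one_smul]; abel
      rw [hrw] at hcc
      simpa [smul_eq_mul] using hcc
    have e0 : xkp + t • v - yk = (xkp - yk) + t • v := by abel
    have e1 : ⟪c, xkp + t • v - yk⟫ = ⟪c, xkp - yk⟫ + t * ⟪c, v⟫ := by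
      rw [e0, inner_add_right, real_inner_smul_right]
    have e2 : ⟪hyk', xkp + t • v - yk⟫ = ⟪hyk', xkp - yk⟫ + t * ⟪hyk', v⟫ := by
      rw [e0, inner_add_right, real_inner_smul_right]
    rw [e1, e2] at hm
    have h0 : 0 ≤ t * (g y - g xkp) + t * ⟪c, v⟫
        + (1 / lam) * (h (xkp + t • v) - h xkp - t * ⟪hyk', v⟫) := by
      nlinarith [hm, hg']
    have ht0 : (t:ℝ) ≠ 0 := ne_of_gt ht.1
    have hl0 : lam ≠ 0 := ne_of_gt hlam
    have heq : ∀ a b q H : ℝ, a + b + (1/lam)*(H/t - q)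
        = (t*a + t*b + (1/lam)*(H - t*q))/t := by
      intro a b q H; field_simp
    rw [show g y - g xkp + ⟪c, v⟫
        + (1 / lam) * ((h (xkp + t • v) - h xkp) / t - ⟪hyk', v⟫)
        = g y - g xkp + ⟪c, v⟫ + (1 / lam) * ((h (xkp + t • v) - h xkp) / t - ⟪hyk', v⟫) from rfl,
      heq (g y - g xkp) ⟪c, v⟫ ⟪hyk', v⟫ (h (xkp + t • v) - h xkp)]
    exact div_nonneg h0 ht.1.le
  have hfinal : 0 ≤ g y - g xkp + ⟪c, v⟫ + (1 / lam) * (⟪hxkp', v⟫ - ⟪hyk', v⟫) :=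
    ge_of_tendsto hF hnn
  have i1 : ⟪c, y - yk⟫ = ⟪c, xkp - yk⟫ + ⟪c, v⟫ := by
    rw [hv, ← inner_add_right]; congr 1; abel
  have i2 : ⟪hyk', y - yk⟫ = ⟪hyk', xkp - yk⟫ + ⟪hyk', v⟫ := by
    rw [hv, ← inner_add_right]; congr 1; abel
  have i3 : ⟪hxkp', y - xkp⟫ = ⟪hxkp', v⟫ := by rw [hv]
  rw [i1, i2, i3]
  nlinarith [hfinal]

/-- Extrapolation decrease inequality for BPDCAe. -/
theorem bpdcae_decrease (d : ℕ)
    (g f₁ f₂ h : EuclideanSpace ℝ (Fin d) → ℝ)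
    (f₁' h' : EuclideanSpace ℝ (Fin d) → EuclideanSpace ℝ (Fin d))
    (hf₁ : ∀ x, HasGradientAt f₁ (f₁' x) x)
    (hh : ∀ x, HasGradientAt h (h' x) x)
    (hgconv : ConvexOn ℝ Set.univ g)
    (hf₁conv : ConvexOn ℝ Set.univ f₁)
    (hf₂conv : ConvexOn ℝ Set.univ f₂)
    (hhconv : ConvexOn ℝ Set.univ h)
    (L : ℝ) (hL : 0 < L)
    (hsmad : ConvexOn ℝ Set.univ (fun x => L * h x - f₁ x))
    (D : EuclideanSpace ℝ (Fin d) → EuclideanSpace ℝ (Fin d) → ℝ)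
    (hD : ∀ x y, D x y = h x - h y - ⟪h' y, x - y⟫)
    (Ψ : EuclideanSpace ℝ (Fin d) → ℝ)
    (hΨ : ∀ x, Ψ x = f₁ x - f₂ x + g x)
    (lam : ℝ) (hlam : 0 < lam)
    (βk : ℝ) (hβk : 0 ≤ βk) (hβk1 : βk < 1)
    (xkm xk yk ξk xkp : EuclideanSpace ℝ (Fin d))
    (hyk : yk = xk + βk • (xk - xkm))
    (hξk : ∀ y, f₂ y ≥ f₂ xk + ⟪ξk, y - xk⟫)
    (hmin : ∀ y, g xkp + ⟪f₁' yk - ξk, xkp - yk⟫ + (1 / lam) * D xkp yk ≤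
      g y + ⟪f₁' yk - ξk, y - yk⟫ + (1 / lam) * D y yk) :
    lam * Ψ xkp ≤ lam * Ψ xk + D xk yk - D xk xkp - (1 - lam * L) * D xkp yk := by
  have hmin' : ∀ y, g xkp + ⟪f₁' yk - ξk, xkp - yk⟫
      + (1 / lam) * (h xkp - h yk - ⟪h' yk, xkp - yk⟫) ≤
      g y + ⟪f₁' yk - ξk, y - yk⟫ + (1 / lam) * (h y - h yk - ⟪h' yk, y - yk⟫) := by
    intro y
    have := hmin y
    rwa [hD, hD] at this
  have K0 := three_point hgconv (hh xkp) hlam hmin' xk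
  have hc1 : ⟪f₁' yk - ξk, xkp - yk⟫ = ⟪f₁' yk, xkp - yk⟫ - ⟪ξk, xkp - yk⟫ :=
    inner_sub_left _ _ _
  have hc2 : ⟪f₁' yk - ξk, xk - yk⟫ = ⟪f₁' yk, xk - yk⟫ - ⟪ξk, xk - yk⟫ :=
    inner_sub_left _ _ _
  rw [hc1, hc2] at K0
  have K1 := mul_le_mul_of_nonneg_left K0 hlam.le
  have e : ∀ X : ℝ, lam * (1 / lam * X) = X := fun X => by field_simp
  simp only [mul_add] at K1
  simp only [e] at K1
  have hf1le := grad_ineq hf₁conv (hf₁ yk) xk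
  have hf2le : f₂ xk + (⟪ξk, xkp - yk⟫ - ⟪ξk, xk - yk⟫) ≤ f₂ xkp := by
    have hb : ⟪ξk, xkp - xk⟫ = ⟪ξk, xkp - yk⟫ - ⟪ξk, xk - yk⟫ := by
      rw [← inner_sub_right]; congr 1; abel
    have := hξk xkp
    rw [hb] at this
    exact this
  have hsgrad : HasGradientAt (fun x => L * h x - f₁ x) (L • h' yk - f₁' yk) yk := by
    have h1 := hasGradientAt_iff_hasFDerivAt.mp (hh yk)
    have h2 := hasGradientAt_iff_hasFDerivAt.mp (hf₁ yk)
    have h3 := (h1.const_mul L).sub h2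
    rw [hasGradientAt_iff_hasFDerivAt]
    have e : InnerProductSpace.toDual ℝ (EuclideanSpace ℝ (Fin d)) (L • h' yk - f₁' yk) =
        L • InnerProductSpace.toDual ℝ _ (h' yk) - InnerProductSpace.toDual ℝ _ (f₁' yk) := by
      simp
    rw [e]
    exact h3
  have hsmle : L * h yk - f₁ yk
      + (L * ⟪h' yk, xkp - yk⟫ - ⟪f₁' yk, xkp - yk⟫) ≤ L * h xkp - f₁ xkp := by
    have hsm : ⟪L • h' yk - f₁' yk, xkp - yk⟫
        = L * ⟪h' yk, xkp - yk⟫ - ⟪f₁' yk, xkp - yk⟫ := by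
      rw [inner_sub_left, real_inner_smul_left]
    have := grad_ineq hsmad hsgrad xkp
    rw [hsm] at this
    exact this
  have m1 := mul_le_mul_of_nonneg_left hf1le hlam.le
  have m2 := mul_le_mul_of_nonneg_left hf2le hlam.le
  have m3 := mul_le_mul_of_nonneg_left hsmle hlam.le
  rw [hΨ, hΨ, hD, hD, hD]
  nlinarith [K1, m1, m2, m3]
end
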